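/- Let G=(V,E) be a directed graph and W ⊆ V with the property that W contains all 'sinks' relevant below; let T be the set of nodes of V∖W that are predecessors (in G − E⁺(W)) of some node of W. Suppose in G − E⁺(W) every node of T has at least one outgoing edge and every outgoing edge of a node of T goes either to a node of W or to a node of T. Then Σ_{v∈T} (d_w(v)/deg⁺(v))·PR¹(v) = |T|, where d_w(v) is the number of edges from v to W, deg⁺ the out-degree in G − E⁺(W), and PR¹ is PageRank with α=1 on G − E⁺(W). -/

import Mathlib

open scoped Classical

/-- Conservation lemma: if `T` consists of unselected predecessors of `W`, every node
of `T` has positive out-degree, all edges leaving `T` go to `W ∪ T`, and all edges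
into `T` come from `T`, then for PageRank with `α = 1` (satisfying the recursion on
`T`), `Σ_{v∈T} (d_w(v)/deg⁺(v))·PR(v) = |T|`. -/
theorem stmt12 {V : Type*} [Fintype V] (E : V → V → Prop) (W T : Finset V)
    (pr : V → ℝ)
    (hdisj : Disjoint W T)
    (hrec : ∀ v ∈ T, pr v = 1 + ∑ u ∈ Finset.univ.filter (fun u => E u v),
      pr u / ((Finset.univ.filter (fun w => E u w)).card : ℝ))
    (hout : ∀ v ∈ T, 0 < (Finset.univ.filter (fun w => E v w)).card)
    (hto : ∀ u ∈ T, ∀ v, E u v → v ∈ W ∨ v ∈ T)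
    (hinto : ∀ u v, E u v → v ∈ T → u ∈ T) :
    ∑ v ∈ T, (((W.filter (fun w => E v w)).card : ℝ) /
      ((Finset.univ.filter (fun w => E v w)).card : ℝ)) * pr v = (T.card : ℝ) := by
  set deg : V → ℝ := fun u => ((Finset.univ.filter (fun w => E u w)).card : ℝ) with hdeg
  -- degree decomposition for u ∈ T
  have hsplit : ∀ u ∈ T, ((W.filter (fun w => E u w)).card : ℝ)
      + ((T.filter (fun w => E u w)).card : ℝ) = deg u := by
    intro u hu
    have hunion : Finset.univ.filter (fun w => E u w)
        = W.filter (fun w => E u w) ∪ T.filter (fun w => E u w) := by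
      ext x
      simp only [Finset.mem_filter, Finset.mem_union, Finset.mem_univ, true_and]
      constructor
      · intro hx
        rcases hto u hu x hx with h | h
        · exact Or.inl ⟨h, hx⟩
        · exact Or.inr ⟨h, hx⟩
      · rintro (⟨_, hx⟩ | ⟨_, hx⟩) <;> exact hx
    have hd : Disjoint (W.filter (fun w => E u w)) (T.filter (fun w => E u w)) :=
      (hdisj.mono (Finset.filter_subset _ _) (Finset.filter_subset _ _))
    rw [hdeg]
    simp only
    rw [hunion, Finset.card_union_of_disjoint hd]
    push_cast
    ring
  -- sum the recursion over T
  have hsum : ∑ v ∈ T, pr v = (T.card : ℝ)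
      + ∑ u ∈ T, ((T.filter (fun w => E u w)).card : ℝ) * (pr u / deg u) := by
    calc ∑ v ∈ T, pr v
        = ∑ v ∈ T, (1 + ∑ u ∈ Finset.univ.filter (fun u => E u v), pr u / deg u) :=
          Finset.sum_congr rfl fun v hv => hrec v hv
      _ = (T.card : ℝ) + ∑ v ∈ T, ∑ u ∈ Finset.univ.filter (fun u => E u v),
            pr u / deg u := by
          rw [Finset.sum_add_distrib, Finset.sum_const, nsmul_eq_mul, mul_one]
      _ = (T.card : ℝ) + ∑ v ∈ T, ∑ u ∈ T.filter (fun u => E u v), pr u / deg u := by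
          congr 1
          refine Finset.sum_congr rfl fun v hv => ?_
          congr 1
          ext u
          simp only [Finset.mem_filter, Finset.mem_univ, true_and]
          exact ⟨fun h => ⟨hinto u v h hv, h⟩, fun h => h.2⟩
      _ = (T.card : ℝ) + ∑ u ∈ T, ∑ v ∈ T.filter (fun v => E u v), pr u / deg u := by
          congr 1
          rw [Finset.sum_sigma', Finset.sum_sigma']
          apply Finset.sum_nbij' (fun x => ⟨x.2, x.1⟩) (fun x => ⟨x.2, x.1⟩) <;>
            simp +contextual [Finset.mem_sigma, Finset.mem_filter]
      _ = (T.card : ℝ) + ∑ u ∈ T, ((T.filter (fun w => E u w)).card : ℝ)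
            * (pr u / deg u) := by
          congr 1
          refine Finset.sum_congr rfl fun u hu => ?_
          rw [Finset.sum_const, nsmul_eq_mul]
  -- now finish by algebra
  have key : ∀ u ∈ T, ((W.filter (fun w => E u w)).card : ℝ) / deg u * pr u
      = pr u - ((T.filter (fun w => E u w)).card : ℝ) * (pr u / deg u) := by
    intro u hu
    have hpos : (0 : ℝ) < deg u := Nat.cast_pos.mpr (hout u hu)
    have h := hsplit u hu
    rw [div_mul_eq_mul_div, mul_div_assoc, eq_sub_iff_add_eq, ← add_mul, h,
      mul_div_assoc']
    exact mul_div_cancel_left₀ (pr u) hpos.ne'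
  calc ∑ v ∈ T, ((W.filter (fun w => E v w)).card : ℝ) / deg v * pr v
      = ∑ v ∈ T, (pr v - ((T.filter (fun w => E v w)).card : ℝ) * (pr v / deg v)) :=
        Finset.sum_congr rfl key
    _ = ∑ v ∈ T, pr v - ∑ v ∈ T, ((T.filter (fun w => E v w)).card : ℝ)
          * (pr v / deg v) := Finset.sum_sub_distrib _ _
    _ = (T.card : ℝ) := by rw [hsum]; ring
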